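/- Let ξ(t) be a compound Poisson process whose jump variable Y satisfies E[e^{δ|Y|}] < ∞ for some δ > 0 and E[Y] = 0. Then for every ε > 0 there exist constants c > 0 and C < ∞ such that for every integer k ≥ 1, P( sup_{k ≤ v ≤ k+1} |ξ(v)|/v ≥ ε ) ≤ C · e^{−c·k}. -/

import Mathlib

open MeasureTheory ProbabilityTheory Filter Set
open scoped ENNReal

/-- The Poisson counting process `N(t) = #{k ≥ 1 : τ₁ + ⋯ + τ_k ≤ t}` built from the
interarrival times `τ₁, τ₂, …` (here `τ i` is the `(i+1)`-st interarrival time). -/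
noncomputable def countProc {Ω : Type*} (τ : ℕ → Ω → ℝ) (t : ℝ) (ω : Ω) : ℕ :=
  Nat.card {k : ℕ | 1 ≤ k ∧ ∑ i ∈ Finset.range k, τ i ω ≤ t}

/-- The compound Poisson process `ξ(t) = Σ_{i=1}^{N(t)} Y_i` with interarrival times `τ`
and jumps `Y`. -/
noncomputable def cpp {Ω : Type*} (τ Y : ℕ → Ω → ℝ) (t : ℝ) (ω : Ω) : ℝ :=
  ∑ i ∈ Finset.range (countProc τ t ω), Y i ω


lemma exp_le_one_add (u : ℝ) : Real.exp u ≤ 1 + u + u^2 * Real.exp |u| := by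
  rcases le_or_gt |u| 1 with h | h
  · have h2 := Real.exp_bound h (n := 2) (by norm_num)
    have h3 : Real.exp u - (1 + u) ≤ u^2 * (3/4) := by
      have h4 : ∑ i ∈ Finset.range 2, u ^ i / i.factorial = 1 + u := by
        simp [Finset.sum_range_succ]
      calc Real.exp u - (1 + u) ≤ |Real.exp u - (1 + u)| := le_abs_self _
        _ ≤ u^2 * (3/4) := by
            have h6 := h2
            simp only [Nat.factorial] at h6
            rw [← h4]
            calc |Real.exp u - ∑ i ∈ Finset.range 2, u ^ i / i.factorial|
                ≤ |u|^2 * ((Nat.succ 2 : ℕ)/(((2:ℕ).factorial : ℝ) * (2:ℕ))) := h2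
              _ = u^2 * (3/4) := by
                  rw [sq_abs]; norm_num [Nat.factorial]
    have h5 : u^2 * (3/4) ≤ u^2 * Real.exp |u| := by
      have : (3/4 : ℝ) ≤ Real.exp |u| := by
        calc (3/4:ℝ) ≤ 1 := by norm_num
        _ ≤ Real.exp |u| := Real.one_le_exp (abs_nonneg u)
      nlinarith [sq_nonneg u]
    linarith
  · rcases le_or_gt 0 u with hu | hu
    · have hu1 : 1 < u := by rwa [abs_of_nonneg hu] at h
      have h1 : Real.exp u ≤ u^2 * Real.exp |u| := by
        rw [abs_of_nonneg hu]
        nlinarith [Real.exp_pos u, sq_nonneg (u-1)]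
      nlinarith
    · have hu1 : u < -1 := by rw [abs_of_neg hu] at h; linarith
      have h1 : Real.exp u ≤ 1 := Real.exp_le_one_iff.mpr (by linarith)
      have h2 : (1:ℝ) ≤ Real.exp |u| := Real.one_le_exp (abs_nonneg u)
      nlinarith [sq_nonneg (u+1)]

lemma sq_le_exp_aux {a x : ℝ} (ha : 0 < a) (hx : 0 ≤ x) :
    x^2 ≤ 4/a^2 * Real.exp (a*x) := by
  have h1 : 1 + a*x/2 ≤ Real.exp (a*x/2) := by
    have := Real.add_one_le_exp (a*x/2); linarith
  have h2 : Real.exp (a*x/2) * Real.exp (a*x/2) = Real.exp (a*x) := by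
    rw [← Real.exp_add]; ring_nf
  have hax : 0 ≤ a*x/2 := by positivity
  have h3 : (a*x/2)^2 ≤ Real.exp (a*x) := by nlinarith [Real.exp_pos (a*x/2)]
  have ha2 : (0:ℝ) < a^2 := by positivity
  rw [div_mul_eq_mul_div, le_div_iff₀ ha2]
  nlinarith

lemma iIndepFun_precomp {Ω ι κ β : Type*} [MeasurableSpace Ω] {μ : Measure Ω}
    [MeasurableSpace β] {f : ι → Ω → β} {g : κ → ι} (hg : Function.Injective g)
    (h : iIndepFun f μ) :
    iIndepFun (fun j => f (g j)) μ := by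
  classical
  rw [iIndepFun_iff_measure_inter_preimage_eq_mul] at h ⊢
  intro S sets hsets
  set D : ι → Set β := fun i => if hi : ∃ j ∈ S, g j = i then sets hi.choose else Set.univ
    with hD
  have e1 : ∀ j ∈ S, D (g j) = sets j := by
    intro j hj
    have hex : ∃ j' ∈ S, g j' = g j := ⟨j, hj, rfl⟩
    rw [hD]; simp only
    rw [dif_pos hex]
    have := hex.choose_spec
    rw [hg this.2]
  have h' := h (S.map ⟨g, hg⟩) (sets := D) ?_
  · have him : (⋂ i ∈ S.map ⟨g, hg⟩, f i ⁻¹' D i) = ⋂ j ∈ S, f (g j) ⁻¹' sets j := by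
      ext x
      simp only [Set.mem_iInter, Finset.mem_map, Function.Embedding.coeFn_mk]
      constructor
      · intro hx j hj
        have := hx (g j) ⟨j, hj, rfl⟩
        rwa [e1 j hj] at this
      · rintro hx i ⟨j, hj, rfl⟩
        rw [e1 j hj]; exact hx j hj
    rw [him, Finset.prod_map] at h'
    rw [h']
    exact Finset.prod_congr rfl fun j hj => by
      simp only [Function.Embedding.coeFn_mk, e1 j hj]
  · intro i hi
    by_cases hex : ∃ j ∈ S, g j = i
    · rw [hD]; simp only
      rw [dif_pos hex]; exact hsets _ hex.choose_spec.1
    · rw [hD]; simp only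
      rw [dif_neg hex]; exact MeasurableSet.univ

private lemma hm_exp (r : ℝ) : Measurable fun x : ℝ => Real.exp (-(r*x)) :=
  ((measurable_id'.const_mul r).neg).exp

lemma expMeasure_eq (r : ℝ) : expMeasure r = volume.withDensity (exponentialPDF r) := rfl

lemma lintegral_exp_neg_expMeasure {r : ℝ} (hr : 0 < r) :
    ∫⁻ x, ENNReal.ofReal (Real.exp (-(r*x))) ∂(expMeasure r) = ENNReal.ofReal (1/2) := by
  rw [expMeasure_eq, lintegral_withDensity_eq_lintegral_mul _
    (show Measurable (exponentialPDF r) from (measurable_exponentialPDFReal r).ennreal_ofReal)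
    (hm_exp r).ennreal_ofReal]
  have hpt : ∀ x : ℝ, (exponentialPDF r * fun x => ENNReal.ofReal (Real.exp (-(r*x)))) x
      = ENNReal.ofReal (1/2) * exponentialPDF (2*r) x := by
    intro x
    simp only [Pi.mul_apply]
    rcases le_or_gt 0 x with hx | hx
    · rw [exponentialPDF_of_nonneg hx, exponentialPDF_of_nonneg hx,
        ← ENNReal.ofReal_mul (by positivity), ← ENNReal.ofReal_mul (by norm_num)]
      rw [show Real.exp (-(2*r*x)) = Real.exp (-(r*x)) * Real.exp (-(r*x)) by
        rw [← Real.exp_add]; ring_nf]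
      ring
    · rw [exponentialPDF_of_neg hx, exponentialPDF_of_neg hx]
      simp
  calc ∫⁻ x, (exponentialPDF r * fun x => ENNReal.ofReal (Real.exp (-(r*x)))) x
      = ∫⁻ x, ENNReal.ofReal (1/2) * exponentialPDF (2*r) x := by
        exact lintegral_congr hpt
    _ = ENNReal.ofReal (1/2) * ∫⁻ x, exponentialPDF (2*r) x := by
        rw [lintegral_const_mul _ (show Measurable (exponentialPDF (2*r)) from (measurable_exponentialPDFReal (2*r)).ennreal_ofReal)]
    _ = ENNReal.ofReal (1/2) := by
        rw [lintegral_exponentialPDF_eq_one (by positivity), mul_one]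

lemma integrable_exp_neg_expMeasure {r : ℝ} (hr : 0 < r) :
    Integrable (fun x => Real.exp (-(r*x))) (expMeasure r) := by
  constructor
  · exact (hm_exp r).aestronglyMeasurable
  · rw [hasFiniteIntegral_iff_ofReal (ae_of_all _ fun x => (Real.exp_pos _).le),
      lintegral_exp_neg_expMeasure hr]
    exact ENNReal.ofReal_lt_top

lemma integral_exp_neg_expMeasure {r : ℝ} (hr : 0 < r) :
    ∫ x, Real.exp (-(r*x)) ∂(expMeasure r) = 1/2 := by
  rw [integral_eq_lintegral_of_nonneg_ae (ae_of_all _ fun x => (Real.exp_pos _).le)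
    (hm_exp r).aestronglyMeasurable, lintegral_exp_neg_expMeasure hr, ENNReal.toReal_ofReal (by norm_num)]
lemma mgf_le_of_expmoment {Ω : Type*} [MeasurableSpace Ω] (μ : Measure Ω)
    [IsProbabilityMeasure μ] {X : Ω → ℝ} (hX : Measurable X) {δ : ℝ} (hδ : 0 < δ)
    (hint : Integrable (fun ω => Real.exp (δ * |X ω|)) μ) (hmean : ∫ ω, X ω ∂μ = 0)
    {t : ℝ} (ht : |t| ≤ δ/2) :
    mgf X μ t ≤ Real.exp ((16 * (∫ ω, Real.exp (δ * |X ω|) ∂μ) / δ^2) * t^2) := by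
  set K := ∫ ω, Real.exp (δ * |X ω|) ∂μ with hK
  -- pointwise bounds
  have hpt1 : ∀ ω, Real.exp (t * X ω) ≤ 1 + t * X ω + (t * X ω)^2 * Real.exp |t * X ω| :=
    fun ω => exp_le_one_add _
  have hpt2 : ∀ ω, (t * X ω)^2 * Real.exp |t * X ω| ≤
      t^2 * (16/δ^2 * Real.exp (δ * |X ω|)) := by
    intro ω
    have h1 : |t * X ω| ≤ (δ/2) * |X ω| := by
      rw [abs_mul]
      exact mul_le_mul_of_nonneg_right ht (abs_nonneg _)
    have h2 : Real.exp |t * X ω| ≤ Real.exp ((δ/2) * |X ω|) := Real.exp_le_exp.mpr h1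
    have h3 : (X ω)^2 ≤ 4/(δ/2)^2 * Real.exp ((δ/2) * |X ω|) := by
      have := sq_le_exp_aux (a := δ/2) (x := |X ω|) (by positivity) (abs_nonneg _)
      rwa [sq_abs] at this
    have h4 : Real.exp ((δ/2) * |X ω|) * Real.exp ((δ/2) * |X ω|) = Real.exp (δ * |X ω|) := by
      rw [← Real.exp_add]; ring_nf
    have h5 : (t * X ω)^2 = t^2 * (X ω)^2 := by ring
    calc (t * X ω)^2 * Real.exp |t * X ω|
        ≤ t^2 * (X ω)^2 * Real.exp ((δ/2) * |X ω|) := by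
          rw [h5]
          exact mul_le_mul_of_nonneg_left h2 (by positivity)
      _ ≤ t^2 * (4/(δ/2)^2 * Real.exp ((δ/2) * |X ω|)) * Real.exp ((δ/2) * |X ω|) := by
          have := mul_le_mul_of_nonneg_right h3 (Real.exp_pos ((δ/2) * |X ω|)).le
          have h6 := mul_le_mul_of_nonneg_left this (sq_nonneg t)
          calc t^2 * (X ω)^2 * Real.exp ((δ/2) * |X ω|)
              = t^2 * ((X ω)^2 * Real.exp ((δ/2) * |X ω|)) := by ring
            _ ≤ t^2 * (4/(δ/2)^2 * Real.exp ((δ/2) * |X ω|) * Real.exp ((δ/2) * |X ω|)) := h6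
            _ = t^2 * (4/(δ/2)^2 * Real.exp ((δ/2) * |X ω|)) * Real.exp ((δ/2) * |X ω|) := by
                ring
      _ = t^2 * (16/δ^2 * Real.exp (δ * |X ω|)) := by
          rw [show t^2 * (4/(δ/2)^2 * Real.exp ((δ/2) * |X ω|)) * Real.exp ((δ/2) * |X ω|)
              = t^2 * (4/(δ/2)^2 * (Real.exp ((δ/2) * |X ω|) * Real.exp ((δ/2) * |X ω|)))
            by ring, h4]
          congr 2
          field_simp
          ring
  -- integrability
  have hK1 : (1:ℝ) ≤ K := by
    rw [hK]
    calc (1:ℝ) = ∫ _ω, (1:ℝ) ∂μ := by simp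
      _ ≤ ∫ ω, Real.exp (δ * |X ω|) ∂μ :=
        integral_mono (integrable_const 1) hint
          (fun ω => Real.one_le_exp (by positivity))
  have hXint : Integrable X μ := by
    refine (hint.const_mul (1/δ)).mono hX.aestronglyMeasurable (ae_of_all _ fun ω => ?_)
    have h1 : δ * |X ω| ≤ Real.exp (δ * |X ω|) := by
      have := Real.add_one_le_exp (δ * |X ω|); linarith
    rw [Real.norm_eq_abs, Real.norm_eq_abs, abs_of_nonneg (by positivity :
      (0:ℝ) ≤ 1/δ * Real.exp (δ * |X ω|))]
    rw [div_mul_eq_mul_div, le_div_iff₀ hδ] at *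
    linarith [abs_nonneg (X ω)]
  have hQmeas : Measurable fun ω => (t * X ω)^2 * Real.exp |t * X ω| :=
    ((hX.const_mul t).pow_const 2).mul ((hX.const_mul t).abs.exp)
  have hGint : Integrable (fun ω => t^2 * (16/δ^2 * Real.exp (δ * |X ω|))) μ :=
    (hint.const_mul _).const_mul _
  have hQint : Integrable (fun ω => (t * X ω)^2 * Real.exp |t * X ω|) μ := by
    refine hGint.mono' hQmeas.aestronglyMeasurable (ae_of_all _ fun ω => ?_)
    rw [Real.norm_eq_abs, abs_of_nonneg (show (0:ℝ) ≤ (t * X ω)^2 * Real.exp |t * X ω| by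
      positivity)]
    exact hpt2 ω
  have hEint : Integrable (fun ω => Real.exp (t * X ω)) μ := by
    refine hint.mono ((hX.const_mul t).exp).aestronglyMeasurable (ae_of_all _ fun ω => ?_)
    rw [Real.norm_eq_abs, Real.norm_eq_abs, abs_of_nonneg (Real.exp_pos _).le,
      abs_of_nonneg (Real.exp_pos _).le]
    apply Real.exp_le_exp.mpr
    calc t * X ω ≤ |t * X ω| := le_abs_self _
      _ ≤ (δ/2) * |X ω| := by
          rw [abs_mul]; exact mul_le_mul_of_nonneg_right ht (abs_nonneg _)
      _ ≤ δ * |X ω| := by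
          apply mul_le_mul_of_nonneg_right (by linarith) (abs_nonneg _)
  -- putting it together
  have hsum : Integrable (fun ω => 1 + t * X ω + (t * X ω)^2 * Real.exp |t * X ω|) μ :=
    ((integrable_const 1).add (hXint.const_mul t)).add hQint
  have step1 : mgf X μ t ≤ 1 + t^2 * (16/δ^2 * K) := by
    have h1 : mgf X μ t ≤ ∫ ω, (1 + t * X ω + (t * X ω)^2 * Real.exp |t * X ω|) ∂μ :=
      integral_mono hEint hsum hpt1
    have h2 : ∫ ω, (1 + t * X ω + (t * X ω)^2 * Real.exp |t * X ω|) ∂μ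
        = 1 + ∫ ω, (t * X ω)^2 * Real.exp |t * X ω| ∂μ := by
      have hP : Integrable (fun ω => 1 + t * X ω) μ := by
        simpa using (integrable_const (1:ℝ)).add (hXint.const_mul t)
      rw [integral_add hP hQint, integral_add (integrable_const 1) (hXint.const_mul t),
        integral_const_mul, hmean, mul_zero, add_zero]
      simp
    have h3 : ∫ ω, (t * X ω)^2 * Real.exp |t * X ω| ∂μ ≤ t^2 * (16/δ^2 * K) := by
      calc ∫ ω, (t * X ω)^2 * Real.exp |t * X ω| ∂μ
          ≤ ∫ ω, t^2 * (16/δ^2 * Real.exp (δ * |X ω|)) ∂μ :=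
            integral_mono hQint hGint hpt2
        _ = t^2 * (16/δ^2 * K) := by
            rw [integral_const_mul, integral_const_mul, hK]
    linarith [h1, h2 ▸ h1]
  have heq : t^2 * (16/δ^2 * K) = 16 * K / δ^2 * t^2 := by ring
  calc mgf X μ t ≤ 1 + t^2 * (16/δ^2 * K) := step1
    _ = 16 * K / δ^2 * t^2 + 1 := by rw [heq]; ring
    _ ≤ Real.exp (16 * K / δ^2 * t^2) := Real.add_one_le_exp _

set_option maxHeartbeats 2000000 in
/-- for a compound Poisson process `ξ(t)` whose centered jump variable has a
finite exponential moment, for every `ε > 0` there are `c > 0` and `C < ∞` such that for every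
integer `k ≥ 1`, `P(sup_{k ≤ v ≤ k+1} |ξ(v)|/v ≥ ε) ≤ C·e^{−c·k}`.
(The supremum is taken in `[0,∞]`.) -/
theorem cpp_block_sup_bound {Ω : Type*} [MeasurableSpace Ω] (μ : Measure Ω)
    [IsProbabilityMeasure μ] (τ Y : ℕ → Ω → ℝ) (r : ℝ) (hr : 0 < r)
    (hτmeas : ∀ i, Measurable (τ i)) (hYmeas : ∀ i, Measurable (Y i))
    (hindep : iIndepFun (Sum.elim τ Y) μ)
    (hτdist : ∀ i, Measure.map (τ i) μ = expMeasure r)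
    (hYdist : ∀ i, Measure.map (Y i) μ = Measure.map (Y 0) μ)
    (hC0 : ∃ δ > 0, Integrable (fun ω => Real.exp (δ * |Y 0 ω|)) μ)
    (hmean : ∫ ω, Y 0 ω ∂μ = 0) :
    ∀ ε : ℝ, 0 < ε → ∃ c > (0 : ℝ), ∃ C : ℝ, ∀ k : ℕ, 1 ≤ k →
      μ {ω | ENNReal.ofReal ε ≤
          ⨆ v : Set.Icc (k : ℝ) ((k : ℝ) + 1), ENNReal.ofReal (|cpp τ Y v ω| / v)} ≤
        ENNReal.ofReal (C * Real.exp (-c * k)) := by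
  obtain ⟨δ, hδ, hintY⟩ := hC0
  intro ε hε
  set K := ∫ ω, Real.exp (δ * |Y 0 ω|) ∂μ with hKdef
  have hK1 : (1:ℝ) ≤ K := by
    rw [hKdef]
    calc (1:ℝ) = ∫ _ω, (1:ℝ) ∂μ := by simp
      _ ≤ ∫ ω, Real.exp (δ * |Y 0 ω|) ∂μ :=
        integral_mono (integrable_const 1) hintY (fun ω => Real.one_le_exp (by positivity))
  have hK0 : (0:ℝ) < K := lt_of_lt_of_le one_pos hK1
  set B := 16 * K / δ^2 with hBdef
  have hB : 0 < B := by rw [hBdef]; positivity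
  set A : ℕ := ⌈(r+1)/Real.log 2⌉₊ + 1 with hAdef
  have hA1 : 1 ≤ A := by omega
  have hApos : (0:ℝ) < (A:ℝ) := by exact_mod_cast hA1
  have hlog2 : 0 < Real.log 2 := Real.log_pos one_lt_two
  have hAlog : r + 1 ≤ (A:ℝ) * Real.log 2 := by
    have h1 : (r+1)/Real.log 2 ≤ (A:ℝ) := by
      refine le_trans (Nat.le_ceil _) ?_
      rw [hAdef]; push_cast; linarith
    calc r+1 = (r+1)/Real.log 2 * Real.log 2 := by field_simp
      _ ≤ (A:ℝ) * Real.log 2 := mul_le_mul_of_nonneg_right h1 hlog2.le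
  set lam := min (δ/2) (ε/(4*A*B)) with hlamdef
  have hlam : 0 < lam := lt_min (by positivity) (by positivity)
  have hlamδ2 : lam ≤ δ/2 := min_le_left _ _
  have hlamδ : |lam| ≤ δ := by rw [abs_of_pos hlam]; linarith
  have hlamδ2' : |lam| ≤ δ/2 := by rw [abs_of_pos hlam]; exact hlamδ2
  have hlamB : (A:ℝ) * B * lam ≤ ε/4 := by
    have h := min_le_right (δ/2) (ε/(4*A*B))
    rw [le_div_iff₀ (by positivity)] at h
    nlinarith
  set c := min 1 (lam*ε/4) with hcdef
  have hc0 : (0:ℝ) < c := lt_min one_pos (by positivity)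
  refine ⟨c, hc0, 1 + 16*(A:ℝ)/(lam*ε), ?_⟩
  intro k hk
  have hk1 : (1:ℝ) ≤ (k:ℝ) := by exact_mod_cast hk
  have hk0 : (0:ℝ) < (k:ℝ) := lt_of_lt_of_le one_pos hk1
  set m := A * (k+1) with hmdef
  have hm1 : 1 ≤ m := by
    rw [hmdef]; exact Nat.one_le_iff_ne_zero.mpr (by positivity)
  have hmR : (m:ℝ) = (A:ℝ) * ((k:ℝ)+1) := by rw [hmdef]; push_cast; ring
  have hmle : (m:ℝ) ≤ 2*(A:ℝ)*(k:ℝ) := by rw [hmR]; nlinarith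
  -- independence of the two families
  have hYindep : iIndepFun Y μ := by
    have := iIndepFun_precomp (f := Sum.elim τ Y) (g := (Sum.inr : ℕ → ℕ ⊕ ℕ))
      Sum.inr_injective hindep
    exact this
  have hτindep : iIndepFun τ μ := by
    have := iIndepFun_precomp (f := Sum.elim τ Y) (g := (Sum.inl : ℕ → ℕ ⊕ ℕ))
      Sum.inl_injective hindep
    exact this
  -- facts about the jumps
  have hexpY0 : ∀ t : ℝ, |t| ≤ δ → Integrable (fun ω => Real.exp (t * Y 0 ω)) μ := by
    intro t ht
    refine hintY.mono ((hYmeas 0).const_mul t).exp.aestronglyMeasurable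
      (ae_of_all _ fun ω => ?_)
    rw [Real.norm_eq_abs, Real.norm_eq_abs, abs_of_nonneg (Real.exp_pos _).le,
      abs_of_nonneg (Real.exp_pos _).le]
    apply Real.exp_le_exp.mpr
    calc t * Y 0 ω ≤ |t * Y 0 ω| := le_abs_self _
      _ = |t| * |Y 0 ω| := abs_mul _ _
      _ ≤ δ * |Y 0 ω| := mul_le_mul_of_nonneg_right ht (abs_nonneg _)
  have hexpY : ∀ (i : ℕ) (t : ℝ), |t| ≤ δ →
      Integrable (fun ω => Real.exp (t * Y i ω)) μ := by
    intro i t ht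
    have hg : ∀ i : ℕ, AEStronglyMeasurable (fun x : ℝ => Real.exp (t * x))
        (Measure.map (Y i) μ) := fun i => ((measurable_id'.const_mul t).exp).aestronglyMeasurable
    have h0 : Integrable (fun x : ℝ => Real.exp (t * x)) (Measure.map (Y 0) μ) := by
      rw [integrable_map_measure (hg 0) (hYmeas 0).aemeasurable]
      exact hexpY0 t ht
    rw [← hYdist i] at h0
    exact (integrable_map_measure (hg i) (hYmeas i).aemeasurable).mp h0
  have hmgfi : ∀ (i : ℕ) (t : ℝ), mgf (Y i) μ t = mgf (Y 0) μ t := by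
    intro i t
    have hg : ∀ j : ℕ, AEStronglyMeasurable (fun x : ℝ => Real.exp (t * x))
        (Measure.map (Y j) μ) := fun j => ((measurable_id'.const_mul t).exp).aestronglyMeasurable
    unfold mgf
    rw [← integral_map (hYmeas i).aemeasurable (hg i), hYdist i,
      integral_map (hYmeas 0).aemeasurable (hg 0)]
  have hmgf0 : ∀ t : ℝ, |t| ≤ δ/2 → mgf (Y 0) μ t ≤ Real.exp (B * t^2) :=
    fun t ht => mgf_le_of_expmoment μ (hYmeas 0) hδ hintY hmean ht
  -- Chernoff bounds for the jump sums
  have hprodbound : ∀ (n : ℕ) (t : ℝ), |t| ≤ δ/2 →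
      mgf (∑ i ∈ Finset.range n, Y i) μ t ≤ Real.exp ((n:ℝ) * (B * t^2)) := by
    intro n t ht
    rw [hYindep.mgf_sum hYmeas]
    calc ∏ i ∈ Finset.range n, mgf (Y i) μ t
        = (mgf (Y 0) μ t)^n := by
          rw [Finset.prod_congr rfl (fun i _ => hmgfi i t), Finset.prod_const,
            Finset.card_range]
      _ ≤ (Real.exp (B * t^2))^n :=
          pow_le_pow_left₀ (mgf_nonneg) (hmgf0 t ht) n
      _ = Real.exp ((n:ℝ) * (B * t^2)) := (Real.exp_nat_mul _ n).symm
  have hexpdecay : ∀ n : ℕ, (n:ℝ) ≤ 2*(A:ℝ)*(k:ℝ) →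
      Real.exp (-lam * (ε*(k:ℝ))) * Real.exp ((n:ℝ) * (B * lam^2))
        ≤ Real.exp (-(lam*ε*(k:ℝ))/2) := by
    intro n hn
    rw [← Real.exp_add]
    apply Real.exp_le_exp.mpr
    have h1 : (n:ℝ) * (B * lam^2) ≤ lam*ε*(k:ℝ)/2 := by
      have ha := mul_le_mul_of_nonneg_right hn (by positivity : (0:ℝ) ≤ B*lam^2)
      have hb := mul_le_mul_of_nonneg_left hlamB
        (by positivity : (0:ℝ) ≤ 2*(k:ℝ)*lam)
      nlinarith
    linarith
  have hVbound : ∀ n : ℕ, (n:ℝ) ≤ 2*(A:ℝ)*(k:ℝ) →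
      μ {ω | ε * (k:ℝ) ≤ |∑ i ∈ Finset.range n, Y i ω|}
        ≤ ENNReal.ofReal (2 * Real.exp (-(lam*ε*(k:ℝ))/2)) := by
    intro n hn
    have hintS : Integrable (fun ω => Real.exp (lam * (∑ i ∈ Finset.range n, Y i) ω)) μ :=
      hYindep.integrable_exp_mul_sum hYmeas (fun i _ => hexpY i lam hlamδ)
    have hintS' : Integrable (fun ω => Real.exp (lam * (-(∑ i ∈ Finset.range n, Y i)) ω)) μ := by
      have h := hYindep.integrable_exp_mul_sum (t := -lam) (s := Finset.range n) hYmeas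
        (fun i _ => hexpY i (-lam) (by rwa [abs_neg]))
      refine h.congr (ae_of_all _ fun ω => ?_)
      simp only [Pi.neg_apply]
      ring_nf
    have hpos : μ {ω | ε * (k:ℝ) ≤ (∑ i ∈ Finset.range n, Y i) ω}
        ≤ ENNReal.ofReal (Real.exp (-(lam*ε*(k:ℝ))/2)) := by
      have cher := measure_ge_le_exp_mul_mgf (μ := μ) (X := ∑ i ∈ Finset.range n, Y i)
        (ε * (k:ℝ)) hlam.le hintS
      have hb : Real.exp (-lam * (ε*(k:ℝ))) * mgf (∑ i ∈ Finset.range n, Y i) μ lam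
          ≤ Real.exp (-(lam*ε*(k:ℝ))/2) := by
        refine le_trans (mul_le_mul_of_nonneg_left (hprodbound n lam hlamδ2')
          (Real.exp_pos _).le) (hexpdecay n hn)
      rw [← ENNReal.ofReal_toReal (measure_ne_top μ _)]
      exact ENNReal.ofReal_le_ofReal (le_trans cher hb)
    have hneg : μ {ω | ε * (k:ℝ) ≤ (-(∑ i ∈ Finset.range n, Y i)) ω}
        ≤ ENNReal.ofReal (Real.exp (-(lam*ε*(k:ℝ))/2)) := by
      have cher := measure_ge_le_exp_mul_mgf (μ := μ) (X := -(∑ i ∈ Finset.range n, Y i))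
        (ε * (k:ℝ)) hlam.le hintS'
      have hmg : mgf (-(∑ i ∈ Finset.range n, Y i)) μ lam
          ≤ Real.exp ((n:ℝ) * (B * lam^2)) := by
        rw [mgf_neg]
        have := hprodbound n (-lam) (by rwa [abs_neg])
        rwa [neg_sq] at this
      have hb : Real.exp (-lam * (ε*(k:ℝ))) * mgf (-(∑ i ∈ Finset.range n, Y i)) μ lam
          ≤ Real.exp (-(lam*ε*(k:ℝ))/2) :=
        le_trans (mul_le_mul_of_nonneg_left hmg (Real.exp_pos _).le) (hexpdecay n hn)
      rw [← ENNReal.ofReal_toReal (measure_ne_top μ _)]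
      exact ENNReal.ofReal_le_ofReal (le_trans cher hb)
    have hsub : {ω | ε * (k:ℝ) ≤ |∑ i ∈ Finset.range n, Y i ω|}
        ⊆ {ω | ε * (k:ℝ) ≤ (∑ i ∈ Finset.range n, Y i) ω}
          ∪ {ω | ε * (k:ℝ) ≤ (-(∑ i ∈ Finset.range n, Y i)) ω} := by
      intro ω hω
      simp only [Set.mem_setOf_eq] at hω
      rcases le_abs.mp hω with h | h
      · exact Or.inl (by simpa [Finset.sum_apply] using h)
      · exact Or.inr (by simpa [Finset.sum_apply] using h)
    calc μ {ω | ε * (k:ℝ) ≤ |∑ i ∈ Finset.range n, Y i ω|}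
        ≤ μ ({ω | ε * (k:ℝ) ≤ (∑ i ∈ Finset.range n, Y i) ω}
          ∪ {ω | ε * (k:ℝ) ≤ (-(∑ i ∈ Finset.range n, Y i)) ω}) := measure_mono hsub
      _ ≤ μ {ω | ε * (k:ℝ) ≤ (∑ i ∈ Finset.range n, Y i) ω}
          + μ {ω | ε * (k:ℝ) ≤ (-(∑ i ∈ Finset.range n, Y i)) ω} := measure_union_le _ _
      _ ≤ ENNReal.ofReal (Real.exp (-(lam*ε*(k:ℝ))/2))
          + ENNReal.ofReal (Real.exp (-(lam*ε*(k:ℝ))/2)) := add_le_add hpos hneg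
      _ = ENNReal.ofReal (2 * Real.exp (-(lam*ε*(k:ℝ))/2)) := by
          rw [← ENNReal.ofReal_add (Real.exp_pos _).le (Real.exp_pos _).le]; ring_nf
  -- Chernoff bound for the arrival times
  have hTint : ∀ i : ℕ, Integrable (fun ω => Real.exp (r * (-(τ i)) ω)) μ := by
    intro i
    have hg : AEStronglyMeasurable (fun x : ℝ => Real.exp (-(r * x)))
        (Measure.map (τ i) μ) := (hm_exp r).aestronglyMeasurable
    have h0 : Integrable (fun x : ℝ => Real.exp (-(r * x))) (Measure.map (τ i) μ) := by
      rw [hτdist i]; exact integrable_exp_neg_expMeasure hr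
    have := (integrable_map_measure hg (hτmeas i).aemeasurable).mp h0
    refine this.congr (ae_of_all _ fun ω => ?_)
    simp only [Function.comp_apply, Pi.neg_apply, mul_neg]
  have hTmgf : ∀ i : ℕ, mgf (-(τ i)) μ r = 1/2 := by
    intro i
    have hg : AEStronglyMeasurable (fun x : ℝ => Real.exp (-(r * x)))
        (Measure.map (τ i) μ) := (hm_exp r).aestronglyMeasurable
    unfold mgf
    have : ∀ ω, Real.exp (r * (-(τ i)) ω) = Real.exp (-(r * τ i ω)) := by
      intro ω; simp only [Pi.neg_apply, mul_neg]
    rw [integral_congr_ae (ae_of_all _ this), ← integral_map (hτmeas i).aemeasurable hg,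
      hτdist i, integral_exp_neg_expMeasure hr]
  have hTindep : iIndepFun (fun i => -(τ i)) μ := hτindep.comp (fun _ => Neg.neg) (fun _ => measurable_neg)
  have hτbound : μ {ω | ∑ i ∈ Finset.range m, τ i ω ≤ (k:ℝ)+1}
      ≤ ENNReal.ofReal (Real.exp (-(k:ℝ))) := by
    have hintT : Integrable (fun ω => Real.exp (r * (∑ i ∈ Finset.range m,
        (fun i => -(τ i)) i) ω)) μ :=
      hTindep.integrable_exp_mul_sum (fun i => (hτmeas i).neg) (fun i _ => hTint i)
    have cher := measure_ge_le_exp_mul_mgf (μ := μ)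
      (X := ∑ i ∈ Finset.range m, (fun i => -(τ i)) i) (-((k:ℝ)+1)) hr.le hintT
    have hmg : mgf (∑ i ∈ Finset.range m, (fun i => -(τ i)) i) μ r = (1/2:ℝ)^m := by
      rw [hTindep.mgf_sum (fun i => (hτmeas i).neg)]
      rw [Finset.prod_congr rfl (fun i _ => hTmgf i), Finset.prod_const, Finset.card_range]
    have hseteq : {ω | ∑ i ∈ Finset.range m, τ i ω ≤ (k:ℝ)+1}
        = {ω | -((k:ℝ)+1) ≤ (∑ i ∈ Finset.range m, (fun i => -(τ i)) i) ω} := by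
      ext ω
      simp only [Set.mem_setOf_eq, Finset.sum_apply, Pi.neg_apply, Finset.sum_neg_distrib,
        neg_le_neg_iff]
    have hreal : Real.exp (-r * -((k:ℝ)+1)) * (1/2:ℝ)^m ≤ Real.exp (-(k:ℝ)) := by
      have h2 : (1/2:ℝ)^m = Real.exp (-((m:ℝ) * Real.log 2)) := by
        rw [show (1/2:ℝ) = Real.exp (-(Real.log 2)) by
          rw [Real.exp_neg, Real.exp_log two_pos]; norm_num]
        rw [← Real.exp_nat_mul]; ring_nf
      rw [h2, ← Real.exp_add]
      apply Real.exp_le_exp.mpr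
      rw [hmR]
      nlinarith [hAlog, hk0, hlog2]
    rw [hseteq, ← ENNReal.ofReal_toReal (measure_ne_top μ _)]
    exact ENNReal.ofReal_le_ofReal (le_trans cher (by rwa [hmg]))
  -- the negligible set where some interarrival time is negative
  have hGc : μ {ω | ¬ ∀ i, 0 ≤ τ i ω} = 0 := by
    have hsub : {ω | ¬ ∀ i, 0 ≤ τ i ω} ⊆ ⋃ i, {ω | τ i ω < 0} := by
      intro ω hω
      push_neg at hω
      obtain ⟨i, hi⟩ := hω
      exact Set.mem_iUnion.mpr ⟨i, hi⟩
    refine measure_mono_null hsub (measure_iUnion_null fun i => ?_)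
    have heq : {ω | τ i ω < 0} = τ i ⁻¹' (Set.Iio 0) := rfl
    rw [heq, ← Measure.map_apply (hτmeas i) measurableSet_Iio, hτdist i,
      expMeasure_eq, withDensity_apply _ measurableSet_Iio]
    exact lintegral_exponentialPDF_of_nonpos le_rfl
  -- the deterministic inclusion
  have hincl : {ω | ENNReal.ofReal ε ≤ ⨆ v : Set.Icc (k:ℝ) ((k:ℝ)+1),
        ENNReal.ofReal (|cpp τ Y v ω| / v)} ∩ {ω | ∀ i, 0 ≤ τ i ω}
      ⊆ {ω | ∑ i ∈ Finset.range m, τ i ω ≤ (k:ℝ)+1}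
        ∪ ⋃ n ∈ Finset.range m, {ω | ε * (k:ℝ) ≤ |∑ i ∈ Finset.range n, Y i ω|} := by
    rintro ω ⟨hE, hG⟩
    rw [Set.mem_union]
    by_contra hcon
    push_neg at hcon
    obtain ⟨h1, h2⟩ := hcon
    simp only [Set.mem_setOf_eq, not_le] at h1
    simp only [Set.mem_iUnion, Set.mem_setOf_eq, not_exists, not_le] at h2
    have hG' : ∀ i : ℕ, 0 ≤ τ i ω := hG
    have hNlt : ∀ v : ℝ, v ≤ (k:ℝ)+1 → countProc τ v ω < m := by
      intro v hv
      have hsubset : {j : ℕ | 1 ≤ j ∧ ∑ i ∈ Finset.range j, τ i ω ≤ v}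
          ⊆ ↑(Finset.Ico 1 m) := by
        rintro j ⟨hj1, hjs⟩
        simp only [Finset.coe_Ico, Set.mem_Ico]
        refine ⟨hj1, ?_⟩
        by_contra hjm
        push_neg at hjm
        have hle : ∑ i ∈ Finset.range m, τ i ω ≤ ∑ i ∈ Finset.range j, τ i ω :=
          Finset.sum_le_sum_of_subset_of_nonneg (Finset.range_subset_range.mpr hjm)
            (fun i _ _ => hG' i)
        linarith
      have hm0 : 0 < m := lt_of_lt_of_le Nat.zero_lt_one hm1
      have hcard : countProc τ v ω ≤ m - 1 := by
        calc countProc τ v ω ≤ Nat.card ↑(↑(Finset.Ico 1 m) : Set ℕ) :=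
              Nat.card_mono (Finset.Ico 1 m).finite_toSet hsubset
          _ = m - 1 := by
              rw [Nat.card_coe_set_eq, Set.ncard_coe_finset, Nat.card_Ico]
      exact lt_of_le_of_lt hcard (Nat.sub_lt hm0 Nat.one_pos)
    have hrange_ne : (Finset.range m).Nonempty := Finset.nonempty_range_iff.mpr (Nat.one_le_iff_ne_zero.mp hm1)
    set maxS := (Finset.range m).sup' hrange_ne
      (fun n => |∑ i ∈ Finset.range n, Y i ω|) with hmaxdef
    have hmax0 : 0 ≤ maxS := by
      refine le_trans (abs_nonneg (∑ i ∈ Finset.range 0, Y i ω)) ?_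
      exact Finset.le_sup' (fun n => |∑ i ∈ Finset.range n, Y i ω|)
        (Finset.mem_range.mpr (lt_of_lt_of_le Nat.zero_lt_one hm1))
    have hsup_le : (⨆ v : Set.Icc (k:ℝ) ((k:ℝ)+1), ENNReal.ofReal (|cpp τ Y v ω| / v))
        ≤ ENNReal.ofReal (maxS / (k:ℝ)) := by
      refine iSup_le fun v => ?_
      obtain ⟨hv1, hv2⟩ := v.2
      apply ENNReal.ofReal_le_ofReal
      have hN := hNlt v hv2
      have hcppabs : |cpp τ Y v ω| ≤ maxS := by
        show |∑ i ∈ Finset.range (countProc τ (v:ℝ) ω), Y i ω| ≤ maxS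
        exact Finset.le_sup' (fun n => |∑ i ∈ Finset.range n, Y i ω|)
          (Finset.mem_range.mpr hN)
      exact div_le_div₀ hmax0 hcppabs hk0 hv1
    have hle : ENNReal.ofReal ε ≤ ENNReal.ofReal (maxS / (k:ℝ)) := le_trans hE hsup_le
    have hεle : ε ≤ maxS / (k:ℝ) :=
      (ENNReal.ofReal_le_ofReal_iff (by positivity)).mp hle
    have hεk : ε * (k:ℝ) ≤ maxS := by rwa [le_div_iff₀ hk0] at hεle
    obtain ⟨n, hn, hne⟩ := Finset.exists_mem_eq_sup' hrange_ne
      (fun n => |∑ i ∈ Finset.range n, Y i ω|)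
    rw [← hmaxdef] at hne
    rw [hne] at hεk
    exact absurd hεk (not_le.mpr (h2 n hn))
  -- assembling the measure bound
  have hmain : μ {ω | ENNReal.ofReal ε ≤ ⨆ v : Set.Icc (k:ℝ) ((k:ℝ)+1),
        ENNReal.ofReal (|cpp τ Y v ω| / v)}
      ≤ ENNReal.ofReal (Real.exp (-(k:ℝ)) + (m:ℝ) * (2 * Real.exp (-(lam*ε*(k:ℝ))/2))) := by
    set E := {ω | ENNReal.ofReal ε ≤ ⨆ v : Set.Icc (k:ℝ) ((k:ℝ)+1),
      ENNReal.ofReal (|cpp τ Y v ω| / v)} with hEdef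
    calc μ E ≤ μ ((E ∩ {ω | ∀ i, 0 ≤ τ i ω}) ∪ {ω | ¬ ∀ i, 0 ≤ τ i ω}) := by
          refine measure_mono fun ω hω => ?_
          by_cases h : ∀ i, 0 ≤ τ i ω
          · exact Or.inl ⟨hω, h⟩
          · exact Or.inr h
      _ ≤ μ (E ∩ {ω | ∀ i, 0 ≤ τ i ω}) + μ {ω | ¬ ∀ i, 0 ≤ τ i ω} := measure_union_le _ _
      _ = μ (E ∩ {ω | ∀ i, 0 ≤ τ i ω}) := by rw [hGc, add_zero]
      _ ≤ μ ({ω | ∑ i ∈ Finset.range m, τ i ω ≤ (k:ℝ)+1}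
          ∪ ⋃ n ∈ Finset.range m, {ω | ε * (k:ℝ) ≤ |∑ i ∈ Finset.range n, Y i ω|}) :=
          measure_mono hincl
      _ ≤ μ {ω | ∑ i ∈ Finset.range m, τ i ω ≤ (k:ℝ)+1}
          + μ (⋃ n ∈ Finset.range m, {ω | ε * (k:ℝ) ≤ |∑ i ∈ Finset.range n, Y i ω|}) :=
          measure_union_le _ _
      _ ≤ μ {ω | ∑ i ∈ Finset.range m, τ i ω ≤ (k:ℝ)+1}
          + ∑ n ∈ Finset.range m, μ {ω | ε * (k:ℝ) ≤ |∑ i ∈ Finset.range n, Y i ω|} :=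
          add_le_add_right (measure_biUnion_finset_le _ _) _
      _ ≤ ENNReal.ofReal (Real.exp (-(k:ℝ)))
          + ∑ n ∈ Finset.range m, ENNReal.ofReal (2 * Real.exp (-(lam*ε*(k:ℝ))/2)) := by
          refine add_le_add hτbound (Finset.sum_le_sum fun n hn => hVbound n ?_)
          have : (n:ℝ) ≤ (m:ℝ) := by exact_mod_cast (Finset.mem_range.mp hn).le
          linarith
      _ = ENNReal.ofReal (Real.exp (-(k:ℝ)))
          + (m:ℕ) * ENNReal.ofReal (2 * Real.exp (-(lam*ε*(k:ℝ))/2)) := by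
          rw [Finset.sum_const, Finset.card_range, nsmul_eq_mul]
      _ = ENNReal.ofReal (Real.exp (-(k:ℝ)) + (m:ℝ) * (2 * Real.exp (-(lam*ε*(k:ℝ))/2))) := by
          rw [← ENNReal.ofReal_natCast m, ← ENNReal.ofReal_mul (by positivity),
            ← ENNReal.ofReal_add (Real.exp_pos _).le (by positivity)]
  refine le_trans hmain (ENNReal.ofReal_le_ofReal ?_)
  -- final real-number estimate
  have hc1 : c ≤ 1 := min_le_left _ _
  have hc2 : c ≤ lam*ε/4 := min_le_right _ _
  have e1 : Real.exp (-(k:ℝ)) ≤ Real.exp (-c*(k:ℝ)) := by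
    apply Real.exp_le_exp.mpr
    nlinarith
  have e3 : (k:ℝ) ≤ 4/(lam*ε) * Real.exp ((lam*ε/4)*(k:ℝ)) := by
    have h := Real.add_one_le_exp ((lam*ε/4)*(k:ℝ))
    have hpos : (0:ℝ) < lam*ε := by positivity
    rw [div_mul_eq_mul_div, le_div_iff₀ hpos]
    nlinarith
  have e4 : Real.exp (-(lam*ε*(k:ℝ))/2) * Real.exp ((lam*ε/4)*(k:ℝ))
      = Real.exp (-(lam*ε/4)*(k:ℝ)) := by
    rw [← Real.exp_add]; ring_nf
  have e5 : Real.exp (-(lam*ε/4)*(k:ℝ)) ≤ Real.exp (-c*(k:ℝ)) := by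
    apply Real.exp_le_exp.mpr
    nlinarith
  have e6 : (m:ℝ) * (2 * Real.exp (-(lam*ε*(k:ℝ))/2))
      ≤ 16*(A:ℝ)/(lam*ε) * Real.exp (-c*(k:ℝ)) := by
    have hexp1 : (0:ℝ) < Real.exp (-(lam*ε*(k:ℝ))/2) := Real.exp_pos _
    have step : (m:ℝ) * (2 * Real.exp (-(lam*ε*(k:ℝ))/2))
        ≤ 4*(A:ℝ)*(k:ℝ) * Real.exp (-(lam*ε*(k:ℝ))/2) := by nlinarith
    have step2 : 4*(A:ℝ)*(k:ℝ) * Real.exp (-(lam*ε*(k:ℝ))/2)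
        ≤ 4*(A:ℝ) * (4/(lam*ε) * Real.exp ((lam*ε/4)*(k:ℝ))) * Real.exp (-(lam*ε*(k:ℝ))/2) := by
      have := mul_le_mul_of_nonneg_right (mul_le_mul_of_nonneg_left e3
        (by positivity : (0:ℝ) ≤ 4*(A:ℝ))) hexp1.le
      calc 4*(A:ℝ)*(k:ℝ) * Real.exp (-(lam*ε*(k:ℝ))/2)
          = 4*(A:ℝ)*(k:ℝ) * Real.exp (-(lam*ε*(k:ℝ))/2) := rfl
        _ ≤ 4*(A:ℝ) * (4/(lam*ε) * Real.exp ((lam*ε/4)*(k:ℝ))) * Real.exp (-(lam*ε*(k:ℝ))/2) :=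
            this
    have step3 : 4*(A:ℝ) * (4/(lam*ε) * Real.exp ((lam*ε/4)*(k:ℝ))) * Real.exp (-(lam*ε*(k:ℝ))/2)
        = 16*(A:ℝ)/(lam*ε) * Real.exp (-(lam*ε/4)*(k:ℝ)) := by
      rw [← e4]; ring
    have step4 : 16*(A:ℝ)/(lam*ε) * Real.exp (-(lam*ε/4)*(k:ℝ))
        ≤ 16*(A:ℝ)/(lam*ε) * Real.exp (-c*(k:ℝ)) :=
      mul_le_mul_of_nonneg_left e5 (by positivity)
    calc (m:ℝ) * (2 * Real.exp (-(lam*ε*(k:ℝ))/2))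
        ≤ 4*(A:ℝ)*(k:ℝ) * Real.exp (-(lam*ε*(k:ℝ))/2) := step
      _ ≤ 4*(A:ℝ) * (4/(lam*ε) * Real.exp ((lam*ε/4)*(k:ℝ))) * Real.exp (-(lam*ε*(k:ℝ))/2) :=
          step2
      _ = 16*(A:ℝ)/(lam*ε) * Real.exp (-(lam*ε/4)*(k:ℝ)) := step3
      _ ≤ 16*(A:ℝ)/(lam*ε) * Real.exp (-c*(k:ℝ)) := step4
  calc Real.exp (-(k:ℝ)) + (m:ℝ) * (2 * Real.exp (-(lam*ε*(k:ℝ))/2))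
      ≤ Real.exp (-c*(k:ℝ)) + 16*(A:ℝ)/(lam*ε) * Real.exp (-c*(k:ℝ)) := add_le_add e1 e6
    _ = (1 + 16*(A:ℝ)/(lam*ε)) * Real.exp (-c*(k:ℝ)) := by ring
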